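/- Let M : ↑↑ → Ĉ(↑↑) be a representation of the category ↑↑ (freely generated by two parallel arrows m₀, m₁ : 0 → 1) satisfying the gluing condition: the pullback square defining Int_M(1) (pullback of M(m₀), M(m₁) : M(0) → M(1)) is also a pushout. Then for any representation N : ↑↑ → D into a bicomplete category D, the tensor product representation M ⊗ N := (Lan_y N) ∘ M also satisfies the gluing condition. -/

import Mathlib

open CategoryTheory Limits Opposite WalkingParallelPair WalkingParallelPairHom

universe v w

/-- The gluing condition for a representation `M : ↑↑ ⥤ D`: the pullback square defining
`Int_M(1)` (the pullback of `M(m₀), M(m₁) : M(0) → M(1)`) is also a pushout square. -/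
def GluingCondition {D : Type w} [Category.{v} D] (M : WalkingParallelPair ⥤ D) : Prop :=
  ∃ (P : D) (a b : P ⟶ M.obj zero) (w : a ≫ M.map left = b ≫ M.map right),
    Nonempty (IsLimit (PullbackCone.mk a b w)) ∧
    Nonempty (IsColimit (PushoutCocone.mk (M.map left) (M.map right) w))

/-- If a square with the same cospan legs `l, r` is a pushout over a span `(a, b)`, and the
span `(a, b)` factors through another span `(a', b')` (which also commutes with `l, r`), then
the square is also a pushout over `(a', b')`. -/
noncomputable def pushoutTransfer {D : Type w} [Category.{v} D] {P P' X Y : D}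
    {a b : P ⟶ X} {a' b' : P' ⟶ X} {l r : X ⟶ Y}
    (w : a ≫ l = b ≫ r) (w' : a' ≫ l = b' ≫ r)
    (φ : P ⟶ P') (ha : φ ≫ a' = a) (hb : φ ≫ b' = b)
    (h : IsColimit (PushoutCocone.mk l r w)) :
    IsColimit (PushoutCocone.mk l r w') := by
  refine PushoutCocone.IsColimit.mk w'
    (fun s => PushoutCocone.IsColimit.desc h s.inl s.inr ?_)
    (fun s => PushoutCocone.IsColimit.inl_desc h _ _ _)
    (fun s => PushoutCocone.IsColimit.inr_desc h _ _ _)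
    (fun s m hm₁ hm₂ => PushoutCocone.IsColimit.hom_ext h ?_ ?_)
  · rw [← ha, ← hb, Category.assoc, Category.assoc, s.condition]
  · exact hm₁.trans (PushoutCocone.IsColimit.inl_desc h s.inl s.inr _).symm
  · exact hm₂.trans (PushoutCocone.IsColimit.inr_desc h s.inl s.inr _).symm

section Aux

universe v₁ u₁

variable {C : Type u₁} [Category.{v₁} C] {D : Type w} [Category.{v} D]
  (N : C ⥤ D) [yoneda.HasPointwiseLeftKanExtension N]

/-- The "restricted Yoneda" functor `X ↦ (c ↦ ULift (N c ⟶ X))` valued in large enough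
presheaves. -/
@[simps]
def restrY : D ⥤ (Cᵒᵖ ⥤ Type (max v₁ v)) where
  obj X :=
    { obj := fun c => ULift.{v₁} (N.obj c.unop ⟶ X)
      map := fun φ => TypeCat.ofHom (fun f => ⟨N.map φ.unop ≫ f.down⟩)
      map_id := fun c => by ext f; dsimp; simp
      map_comp := fun φ ψ => by ext f; dsimp; simp }
  map g := { app := fun c => TypeCat.ofHom (fun f => ⟨f.down ≫ g⟩) }

/-- The universe-lifting functor on presheaves. -/
noncomputable abbrev liftP : (Cᵒᵖ ⥤ Type v₁) ⥤ (Cᵒᵖ ⥤ Type (max v₁ v)) :=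
  (Functor.whiskeringRight _ _ _).obj uliftFunctor.{v}

/-- The map sending `t : (Lan_y N)(Q) ⟶ X` to a natural transformation
`liftP Q ⟶ restrY N X`. -/
@[simps]
noncomputable def theta {Q : Cᵒᵖ ⥤ Type v₁} {X : D}
    (t : (yoneda.leftKanExtension N).obj Q ⟶ X) :
    (liftP.{v, v₁, u₁} (C := C)).obj Q ⟶ (restrY N).obj X where
  app c := TypeCat.ofHom (fun x => ⟨(yoneda.leftKanExtensionUnit N).app c.unop ≫
    (yoneda.leftKanExtension N).map (yonedaEquiv.symm x.down) ≫ t⟩)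
  naturality c c' φ := by
    ext x
    have h := (yoneda.leftKanExtensionUnit N).naturality φ.unop
    apply ULift.ext
    change (yoneda.leftKanExtensionUnit N).app c'.unop ≫
      (yoneda.leftKanExtension N).map (yonedaEquiv.symm (Q.map φ x.down)) ≫ t =
      N.map φ.unop ≫ (yoneda.leftKanExtensionUnit N).app c.unop ≫
      (yoneda.leftKanExtension N).map (yonedaEquiv.symm x.down) ≫ t
    dsimp at h
    rw [yonedaEquiv_symm_map, Functor.map_comp]
    simp only [Category.assoc]
    rw [← reassoc_of% h]

lemma theta_app_down' {Q : Cᵒᵖ ⥤ Type v₁} {X : D}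
    (t : (yoneda.leftKanExtension N).obj Q ⟶ X) (c : Cᵒᵖ) (x : ULift.{v} (Q.obj c)) :
    ((theta N t).app c x).down = (yoneda.leftKanExtensionUnit N).app c.unop ≫
      (yoneda.leftKanExtension N).map (yonedaEquiv.symm x.down) ≫ t := rfl

lemma theta_natQ {Q Q' : Cᵒᵖ ⥤ Type v₁} (σ : Q ⟶ Q') {X : D}
    (t : (yoneda.leftKanExtension N).obj Q' ⟶ X) :
    theta N ((yoneda.leftKanExtension N).map σ ≫ t) =
      (liftP.{v, v₁, u₁} (C := C)).map σ ≫ theta N t := by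
  ext c x
  obtain ⟨c⟩ := c
  apply ULift.ext
  change (yoneda.leftKanExtensionUnit N).app c ≫
      (yoneda.leftKanExtension N).map (yonedaEquiv.symm x.down) ≫
        ((yoneda.leftKanExtension N).map σ ≫ t) =
    (yoneda.leftKanExtensionUnit N).app c ≫
      (yoneda.leftKanExtension N).map (yonedaEquiv.symm (σ.app (op c) x.down)) ≫ t
  rw [← yonedaEquiv_symm_naturality_right, Functor.map_comp]
  simp

lemma theta_injective {Q : Cᵒᵖ ⥤ Type v₁} {X : D}
    {t₁ t₂ : (yoneda.leftKanExtension N).obj Q ⟶ X}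
    (h : theta N t₁ = theta N t₂) : t₁ = t₂ := by
  apply (Functor.isPointwiseLeftKanExtensionOfIsLeftKanExtension
    (yoneda.leftKanExtension N) (yoneda.leftKanExtensionUnit N) Q).hom_ext
  intro g
  have h' := congrArg (fun ψ => (ψ.app (op g.left) ⟨yonedaEquiv g.hom⟩).down) h
  rw [theta_app_down', theta_app_down'] at h'
  dsimp only at h'
  rw [Equiv.symm_apply_apply] at h'
  exact (Category.assoc _ _ _).trans (h'.trans (Category.assoc _ _ _).symm)

/-- The cocone attached to a natural transformation `liftP Q ⟶ restrY N X`. -/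
@[simps]
def psiCocone {Q : Cᵒᵖ ⥤ Type v₁} {X : D}
    (ψ : (liftP.{v, v₁, u₁} (C := C)).obj Q ⟶ (restrY N).obj X) :
    Cocone (CostructuredArrow.proj yoneda Q ⋙ N) where
  pt := X
  ι :=
    { app := fun g => (ψ.app (op g.left) ⟨yonedaEquiv g.hom⟩).down
      naturality := fun g₁ g₂ φ => by
        have h := ConcreteCategory.congr_hom (ψ.naturality φ.left.op) ⟨yonedaEquiv g₂.hom⟩
        change ψ.app (op g₁.left) ⟨Q.map φ.left.op (yonedaEquiv g₂.hom)⟩ =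
          (⟨N.map φ.left ≫ (ψ.app (op g₂.left) ⟨yonedaEquiv g₂.hom⟩).down⟩ :
            ULift.{v₁} (N.obj g₁.left ⟶ X)) at h
        change N.map φ.left ≫ (ψ.app (op g₂.left) ⟨yonedaEquiv g₂.hom⟩).down =
          (ψ.app (op g₁.left) ⟨yonedaEquiv g₁.hom⟩).down ≫ 𝟙 X
        rw [Category.comp_id]
        have e : Q.map φ.left.op (yonedaEquiv g₂.hom) = yonedaEquiv g₁.hom := by
          rw [map_yonedaEquiv, ← CostructuredArrow.w φ, yonedaEquiv_comp,
            yonedaEquiv_yoneda_map]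
        rw [e] at h
        exact (congrArg ULift.down h).symm }

/-- The inverse construction: from a natural transformation `liftP Q ⟶ restrY N X`,
a morphism `(Lan_y N)(Q) ⟶ X`. -/
noncomputable def thetaDesc {Q : Cᵒᵖ ⥤ Type v₁} {X : D}
    (ψ : (liftP.{v, v₁, u₁} (C := C)).obj Q ⟶ (restrY N).obj X) :
    (yoneda.leftKanExtension N).obj Q ⟶ X :=
  (Functor.isPointwiseLeftKanExtensionOfIsLeftKanExtension
    (yoneda.leftKanExtension N) (yoneda.leftKanExtensionUnit N) Q).desc (psiCocone N ψ)

lemma theta_thetaDesc {Q : Cᵒᵖ ⥤ Type v₁} {X : D}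
    (ψ : (liftP.{v, v₁, u₁} (C := C)).obj Q ⟶ (restrY N).obj X) :
    theta N (thetaDesc N ψ) = ψ := by
  ext c x
  obtain ⟨c⟩ := c
  obtain ⟨x⟩ := x
  have h := (Functor.isPointwiseLeftKanExtensionOfIsLeftKanExtension
    (yoneda.leftKanExtension N) (yoneda.leftKanExtensionUnit N) Q).fac
    (psiCocone N ψ) (CostructuredArrow.mk (yonedaEquiv.symm x))
  dsimp [thetaDesc] at h ⊢
  apply ULift.ext
  change (yoneda.leftKanExtensionUnit N).app c ≫ (yoneda.leftKanExtension N).map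
    (yonedaEquiv.symm x) ≫ thetaDesc N ψ = (ψ.app (op c) ⟨x⟩).down
  refine (Category.assoc _ _ _).symm.trans (h.trans ?_)
  change (ψ.app (op c) ⟨yonedaEquiv (yonedaEquiv.symm x)⟩).down = _
  rw [Equiv.apply_symm_apply]

/-- `Lan_y N` sends pushout squares of presheaves to pushout squares in `D`. -/
noncomputable def lanPreservesPushout {P Q₀ Q₁ : Cᵒᵖ ⥤ Type v₁}
    {a b : P ⟶ Q₀} {l r : Q₀ ⟶ Q₁} (w : a ≫ l = b ≫ r)
    (hpo : IsColimit (PushoutCocone.mk l r w)) :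
    IsColimit (PushoutCocone.mk ((yoneda.leftKanExtension N).map l)
      ((yoneda.leftKanExtension N).map r)
      (show (yoneda.leftKanExtension N).map a ≫ _ = (yoneda.leftKanExtension N).map b ≫ _ by
        rw [← Functor.map_comp, ← Functor.map_comp, w])) := by
  set F := yoneda.leftKanExtension N
  have hpoL : IsColimit (PushoutCocone.mk ((liftP.{v, v₁, u₁} (C := C)).map l)
      ((liftP.{v, v₁, u₁} (C := C)).map r)
      (show (liftP.{v, v₁, u₁} (C := C)).map a ≫ _ = (liftP.{v, v₁, u₁} (C := C)).map b ≫ _ by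
        rw [← Functor.map_comp, ← Functor.map_comp, w])) :=
    isColimitPushoutCoconeMapOfIsColimit (liftP.{v, v₁, u₁} (C := C)) w hpo
  refine PushoutCocone.IsColimit.mk _
    (fun s => thetaDesc N (PushoutCocone.IsColimit.desc hpoL (theta N s.inl) (theta N s.inr) ?_))
    (fun s => theta_injective N ?_) (fun s => theta_injective N ?_)
    (fun s m hm₁ hm₂ => theta_injective N ?_)
  · rw [← theta_natQ, ← theta_natQ, s.condition]
  · rw [theta_natQ]
    refine (congrArg ((liftP.{v, v₁, u₁} (C := C)).map l ≫ ·) (theta_thetaDesc N _)).trans ?_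
    exact PushoutCocone.IsColimit.inl_desc hpoL _ _ _
  · rw [theta_natQ]
    refine (congrArg ((liftP.{v, v₁, u₁} (C := C)).map r ≫ ·) (theta_thetaDesc N _)).trans ?_
    exact PushoutCocone.IsColimit.inr_desc hpoL _ _ _
  · refine Eq.trans ?_ (theta_thetaDesc N _).symm
    refine PushoutCocone.IsColimit.hom_ext hpoL ?_ ?_
    · simp only [PushoutCocone.mk_inl]
      refine (theta_natQ N l m).symm.trans ((congrArg (theta N) hm₁).trans ?_)
      exact (PushoutCocone.IsColimit.inl_desc hpoL _ _ _).symm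
    · simp only [PushoutCocone.mk_inr]
      refine (theta_natQ N r m).symm.trans ((congrArg (theta N) hm₂).trans ?_)
      exact (PushoutCocone.IsColimit.inr_desc hpoL _ _ _).symm

end Aux

/-- If a representation `M : ↑↑ ⥤ Ĉ(↑↑)` into the presheaf category on `↑↑`
satisfies the gluing condition, then for any representation `N : ↑↑ ⥤ D` into a bicomplete
category `D`, the tensor product representation `M ⊗ N = (Lan_y N) ∘ M` also satisfies the
gluing condition. -/
theorem statement14 (M : WalkingParallelPair ⥤ (WalkingParallelPairᵒᵖ ⥤ Type))
    (hM : GluingCondition M)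
    {D : Type w} [Category.{v} D] [HasLimits D] [HasColimits D]
    (N : WalkingParallelPair ⥤ D) :
    GluingCondition (M ⋙ yoneda.leftKanExtension N) := by
  obtain ⟨P, a, b, w, ⟨-⟩, ⟨hpo⟩⟩ := hM
  set F := yoneda.leftKanExtension N with hF
  have hpo' : IsColimit (PushoutCocone.mk (F.map (M.map left)) (F.map (M.map right))
      (show F.map a ≫ F.map (M.map left) = F.map b ≫ F.map (M.map right) by
        rw [← F.map_comp, ← F.map_comp, w])) :=
    lanPreservesPushout N w hpo
  refine ⟨pullback (F.map (M.map left)) (F.map (M.map right)), pullback.fst _ _,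
    pullback.snd _ _, pullback.condition, ⟨pullbackIsPullback _ _⟩, ⟨?_⟩⟩
  exact pushoutTransfer _ _ (pullback.lift (F.map a) (F.map b)
      (by rw [← F.map_comp, ← F.map_comp, w]))
    (pullback.lift_fst _ _ _) (pullback.lift_snd _ _ _) hpo'
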